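/- Let β > 1 and ω = (ω_1,…,ω_n) an admissible word. The cylinder I_n(ω) is full (i.e., |I_n(ω)| = β^{-n}) if and only if T_β^n(I_n(ω)) = [0,1), if and only if for every m ≥ 1 and every admissible word ω' of length m, the concatenation ω * ω' is admissible. -/

import Mathlib

open Filter MeasureTheory Set

noncomputable def betaT (β : ℝ) (x : ℝ) : ℝ := β * x - ⌊β * x⌋

noncomputable def eps (β x : ℝ) (n : ℕ) : ℤ := ⌊β * (betaT β)^[n - 1] x⌋

noncomputable def runLen (β x : ℝ) (n : ℕ) : ℕ :=
  sSup {j | ∃ i, i + j ≤ n ∧ ∀ k < j, eps β x (i + k + 1) = 0}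

def isAdmissible (β : ℝ) (n : ℕ) (ω : ℕ → ℤ) : Prop :=
  ∃ x ∈ Set.Ico (0 : ℝ) 1, ∀ k < n, eps β x (k + 1) = ω k

def cylinder (β : ℝ) (n : ℕ) (ω : ℕ → ℤ) : Set ℝ :=
  {x | x ∈ Set.Ico (0 : ℝ) 1 ∧ ∀ k < n, eps β x (k + 1) = ω k}

def isFull (β : ℝ) (n : ℕ) (ω : ℕ → ℤ) : Prop :=
  MeasureTheory.volume (cylinder β n ω) = ENNReal.ofReal (β ^ (-(n : ℤ)))

open Classical in
noncomputable def epsStar (β : ℝ) : ℕ → ℤ :=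
  if h : ∃ m, 1 ≤ m ∧ eps β 1 m ≠ 0 ∧ ∀ k, m < k → eps β 1 k = 0 then
    fun n =>
      if (n - 1) % Nat.find h + 1 = Nat.find h then eps β 1 (Nat.find h) - 1
      else eps β 1 ((n - 1) % Nat.find h + 1)
  else eps β 1

def lexLt (u v : ℕ → ℤ) : Prop := ∃ j, (∀ k < j, u k = v k) ∧ u j < v j

def lexLe (u v : ℕ → ℤ) : Prop := lexLt u v ∨ u = v

noncomputable def vbeta (β x : ℝ) : ℝ :=
  sSup {v | 0 ≤ v ∧ ∃ᶠ n : ℕ in atTop, (betaT β)^[n] x ≤ β ^ (-((n : ℝ) * v))}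

noncomputable def hatv (β x : ℝ) : ℝ :=
  sSup {v | 0 ≤ v ∧ ∀ᶠ N : ℕ in atTop, ∃ n, 1 ≤ n ∧ n ≤ N ∧ (betaT β)^[n] x ≤ β ^ (-(v * (N : ℝ)))}


section auxlem

variable {β x : ℝ} {ω : ℕ → ℤ} {n : ℕ}

lemma betaT_mem_Ico (β x : ℝ) : betaT β x ∈ Set.Ico (0:ℝ) 1 := by
  have h1 : betaT β x = Int.fract (β * x) := rfl
  rw [h1]
  exact ⟨Int.fract_nonneg _, Int.fract_lt_one _⟩

lemma iterate_mem_Ico (β x : ℝ) {n : ℕ} (hn : 1 ≤ n) :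
    (betaT β)^[n] x ∈ Set.Ico (0:ℝ) 1 := by
  obtain ⟨m, rfl⟩ := Nat.exists_eq_add_of_le hn
  rw [add_comm, Function.iterate_succ_apply']
  exact betaT_mem_Ico _ _

lemma eps_succ (β x : ℝ) (k : ℕ) : eps β x (k+1) = ⌊β * (betaT β)^[k] x⌋ := by
  simp [eps]

noncomputable def wc (β : ℝ) (ω : ℕ → ℤ) : ℕ → ℝ
  | 0 => 0
  | k+1 => β * wc β ω k + (ω k : ℝ)

lemma iterate_eq (h : ∀ j < n, eps β x (j+1) = ω j) :
    (betaT β)^[n] x = β^n * x - wc β ω n := by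
  induction n with
  | zero => simp [wc]
  | succ k ih =>
    have hk : (betaT β)^[k] x = β^k * x - wc β ω k :=
      ih (fun j hj => h j (hj.trans (Nat.lt_succ_self k)))
    have hfl : ⌊β * (β^k * x - wc β ω k)⌋ = ω k := by
      rw [← hk, ← eps_succ]; exact h k (Nat.lt_succ_self k)
    rw [Function.iterate_succ_apply', hk, betaT, hfl, wc]
    push_cast
    ring

lemma eps_of_ineq (hx : x ∈ Set.Ico (0:ℝ) 1)
    (h : ∀ j < n, (ω j : ℝ) ≤ β^(j+1)*x - β * wc β ω j ∧
      β^(j+1)*x - β * wc β ω j < (ω j : ℝ) + 1) :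
    ∀ j < n, eps β x (j+1) = ω j := by
  intro j
  induction j using Nat.strong_induction_on with
  | _ j ih =>
    intro hj
    have hiter : (betaT β)^[j] x = β^j * x - wc β ω j :=
      iterate_eq (fun i hi => ih i hi (hi.trans hj))
    rw [eps_succ, hiter, Int.floor_eq_iff]
    have h1 := (h j hj).1
    have h2 := (h j hj).2
    have he : β * (β^j * x - wc β ω j) = β^(j+1)*x - β * wc β ω j := by ring
    rw [he]
    exact ⟨h1, h2⟩

lemma cylinder_eq_inter (hβ : 1 < β) :
    _root_.cylinder β n ω = Set.Ico (0:ℝ) 1 ∩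
      ⋂ k ∈ Finset.range n, Set.Ico (((ω k : ℝ) + β * wc β ω k)/β^(k+1))
        (((ω k : ℝ) + 1 + β * wc β ω k)/β^(k+1)) := by
  have hb0 : (0:ℝ) < β := lt_trans one_pos hβ
  ext x
  simp only [_root_.cylinder, Set.mem_setOf_eq, Set.mem_inter_iff, Set.mem_iInter,
    Finset.mem_range, Set.mem_Ico]
  constructor
  · rintro ⟨hx, hd⟩
    refine ⟨hx, fun k hk => ?_⟩
    have hiter : (betaT β)^[k] x = β^k * x - wc β ω k :=
      iterate_eq (fun j hj => hd j (hj.trans hk))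
    have he := hd k hk
    rw [eps_succ, hiter, Int.floor_eq_iff] at he
    have hid : β * (β^k * x - wc β ω k) = β^(k+1)*x - β * wc β ω k := by ring
    rw [hid] at he
    have hp : (0:ℝ) < β^(k+1) := pow_pos hb0 _
    constructor
    · rw [div_le_iff₀ hp]
      nlinarith [he.1]
    · rw [lt_div_iff₀ hp]
      nlinarith [he.2]
  · rintro ⟨hx, hd⟩
    refine ⟨hx, eps_of_ineq hx (fun j hj => ?_)⟩
    have hp : (0:ℝ) < β^(j+1) := pow_pos hb0 _
    have h1 := (hd j hj).1
    have h2 := (hd j hj).2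
    rw [div_le_iff₀ hp] at h1
    rw [lt_div_iff₀ hp] at h2
    constructor <;> nlinarith

lemma exists_Ico_family (n : ℕ) (a b : ℕ → ℝ) :
    ∃ A B : ℝ, (Set.Ico (0:ℝ) 1 ∩ ⋂ k ∈ Finset.range n, Set.Ico (a k) (b k))
      = Set.Ico A B := by
  induction n with
  | zero => exact ⟨0, 1, by simp⟩
  | succ m ih =>
    obtain ⟨A, B, hAB⟩ := ih
    refine ⟨max A (a m), min B (b m), ?_⟩
    rw [Finset.range_add_one, Finset.set_biInter_insert,
      Set.inter_comm (Set.Ico (a m) (b m)), ← Set.inter_assoc, hAB, Set.Ico_inter_Ico]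

lemma eps_shift (β x : ℝ) (n k : ℕ) :
    eps β x (n + k + 1) = eps β ((betaT β)^[n] x) (k+1) := by
  rw [eps_succ, eps_succ, ← Function.iterate_add_apply, add_comm k n]

lemma image_affine_Ico (c : ℝ) {s : ℝ} (hs : 0 < s) (A B : ℝ) :
    (fun x => s * x - c) '' Set.Ico A B = Set.Ico (s*A - c) (s*B - c) := by
  ext y
  simp only [Set.mem_image, Set.mem_Ico]
  constructor
  · rintro ⟨x, ⟨h1, h2⟩, rfl⟩
    constructor <;> nlinarith
  · rintro ⟨h1, h2⟩
    refine ⟨(y + c)/s, ⟨?_, ?_⟩, by field_simp; ring⟩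
    · rw [le_div_iff₀ hs]; nlinarith
    · rw [div_lt_iff₀ hs]; nlinarith

lemma cylinder_dist (hβ : 1 < β) {m : ℕ} (hm : 1 ≤ m) {ω' : ℕ → ℤ} {x y : ℝ}
    (hx : x ∈ _root_.cylinder β m ω') (hy : y ∈ _root_.cylinder β m ω') :
    |x - y| < (β^m)⁻¹ := by
  have hb0 : (0:ℝ) < β := lt_trans one_pos hβ
  have hbm : (0:ℝ) < β^m := pow_pos hb0 m
  have h1 : (betaT β)^[m] x = β^m * x - wc β ω' m := iterate_eq hx.2
  have h2 : (betaT β)^[m] y = β^m * y - wc β ω' m := iterate_eq hy.2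
  have hxm := iterate_mem_Ico β x hm
  have hym := iterate_mem_Ico β y hm
  rw [h1, Set.mem_Ico] at hxm
  rw [h2, Set.mem_Ico] at hym
  rw [abs_lt]
  have hinv : β^m * (β^m)⁻¹ = 1 := mul_inv_cancel₀ (ne_of_gt hbm)
  constructor
  · nlinarith [hxm.1, hym.2]
  · nlinarith [hxm.2, hym.1]

lemma exists_inv_pow_lt (hβ : 1 < β) {ε : ℝ} (hε : 0 < ε) :
    ∃ m : ℕ, 1 ≤ m ∧ (β^m)⁻¹ < ε := by
  have hinv0 : (0:ℝ) ≤ β⁻¹ := by positivity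
  have hinv : β⁻¹ < 1 := inv_lt_one_of_one_lt₀ hβ
  obtain ⟨k, hk⟩ := exists_pow_lt_of_lt_one hε hinv
  refine ⟨k + 1, Nat.le_add_left 1 k, ?_⟩
  have h1 : (β^(k+1))⁻¹ = (β⁻¹)^(k+1) := by rw [inv_pow]
  have h2 : (β⁻¹)^(k+1) ≤ (β⁻¹)^k :=
    pow_le_pow_of_le_one hinv0 (le_of_lt hinv) (Nat.le_succ k)
  rw [h1]
  exact lt_of_le_of_lt h2 hk

end auxlem

set_option maxHeartbeats 2000000 in
theorem stmt12 (β : ℝ) (hβ : 1 < β) (n : ℕ) (hn : 1 ≤ n) (ω : ℕ → ℤ)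
    (hadm : isAdmissible β n ω) :
    (isFull β n ω ↔ (betaT β)^[n] '' cylinder β n ω = Set.Ico (0 : ℝ) 1) ∧
    (isFull β n ω ↔ ∀ m : ℕ, 1 ≤ m → ∀ ω' : ℕ → ℤ, isAdmissible β m ω' →
      isAdmissible β (n + m) (fun k => if k < n then ω k else ω' (k - n))) := by
  classical
  have hb0 : (0:ℝ) < β := lt_trans one_pos hβ
  have hbn : (0:ℝ) < β^n := pow_pos hb0 n
  obtain ⟨A, B, hcyl⟩ : ∃ A B : ℝ, cylinder β n ω = Set.Ico A B := by
    rw [cylinder_eq_inter hβ]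
    exact exists_Ico_family n _ _
  obtain ⟨x₀, hx₀, hd₀⟩ := hadm
  have hx₀c : x₀ ∈ cylinder β n ω := ⟨hx₀, hd₀⟩
  have hAB : A < B := by
    have h := hcyl ▸ hx₀c
    exact lt_of_le_of_lt h.1 h.2
  set c := wc β ω n with hc
  have hiter : ∀ x ∈ cylinder β n ω, (betaT β)^[n] x = β^n * x - c :=
    fun x hx => iterate_eq hx.2
  have himg : (betaT β)^[n] '' cylinder β n ω = Set.Ico (β^n*A - c) (β^n*B - c) := by
    rw [show (betaT β)^[n] '' cylinder β n ω = (fun x => β^n*x - c) '' cylinder β n ω from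
      Set.image_congr hiter, hcyl, image_affine_Ico c hbn A B]
  set SA := β^n*A - c with hSAdef
  set SB := β^n*B - c with hSBdef
  have hSAB : SA < SB := by
    rw [hSAdef, hSBdef]
    nlinarith
  have hsub : Set.Ico SA SB ⊆ Set.Ico (0:ℝ) 1 := by
    rw [← himg]
    rintro y ⟨x, _, rfl⟩
    exact iterate_mem_Ico β x hn
  have hSA0 : 0 ≤ SA := (hsub ⟨le_refl SA, hSAB⟩).1
  have hSA1 : SA < 1 := (hsub ⟨le_refl SA, hSAB⟩).2
  have hSB1 : SB ≤ 1 := by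
    by_contra h
    push_neg at h
    exact absurd (hsub ⟨le_of_lt hSA1, h⟩).2 (lt_irrefl 1)
  have hfull_iff2 : isFull β n ω ↔ (SA = 0 ∧ SB = 1) := by
    rw [isFull, hcyl, Real.volume_Ico,
      show β ^ (-(n:ℤ)) = (β^n)⁻¹ by rw [zpow_neg, zpow_natCast],
      ENNReal.ofReal_eq_ofReal_iff (by linarith) (by positivity)]
    constructor
    · intro h
      have hdiff : SB - SA = 1 := by
        rw [hSAdef, hSBdef]
        have : β^n * (B - A) = 1 := by
          rw [h]
          exact mul_inv_cancel₀ (ne_of_gt hbn)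
        nlinarith
      constructor <;> linarith
    · rintro ⟨h0, h1⟩
      have hdiff : β^n * (B - A) = 1 := by
        have h2 : SB - SA = 1 := by rw [h0, h1]; ring
        rw [hSAdef, hSBdef] at h2
        nlinarith
      exact eq_inv_of_mul_eq_one_left (by rw [mul_comm]; exact hdiff)
  have himg_iff : isFull β n ω ↔ (betaT β)^[n] '' cylinder β n ω = Set.Ico (0:ℝ) 1 := by
    rw [hfull_iff2, himg]
    constructor
    · rintro ⟨h0, h1⟩
      rw [h0, h1]
    · intro h
      have h0 : (0:ℝ) ∈ Set.Ico SA SB := by rw [h]; exact ⟨le_refl 0, one_pos⟩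
      have hA : SA = 0 := le_antisymm h0.1 hSA0
      refine ⟨hA, ?_⟩
      by_contra hB
      have hBlt : SB < 1 := lt_of_le_of_ne hSB1 hB
      have : SB ∈ Set.Ico SA SB := by
        rw [h]
        exact ⟨le_of_lt (lt_of_le_of_lt hSA0 hSAB), hBlt⟩
      exact absurd this.2 (lt_irrefl SB)
  refine ⟨himg_iff, ?_⟩
  constructor
  · -- full implies concatenations admissible
    intro hfull m hm ω' ⟨y, hy, hdy⟩
    have himg1 : (betaT β)^[n] '' cylinder β n ω = Set.Ico (0:ℝ) 1 := himg_iff.mp hfull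
    have : y ∈ (betaT β)^[n] '' cylinder β n ω := himg1 ▸ hy
    obtain ⟨x, hxc, hTx⟩ := this
    refine ⟨x, hxc.1, fun k hk => ?_⟩
    by_cases hkn : k < n
    · simp only [if_pos hkn]
      exact hxc.2 k hkn
    · push_neg at hkn
      simp only [if_neg (not_lt.mpr hkn)]
      obtain ⟨j, rfl⟩ : ∃ j, k = n + j := ⟨k - n, by omega⟩
      rw [Nat.add_sub_cancel_left, eps_shift, hTx]
      exact hdy j (by omega)
  · -- concatenation property implies full
    intro hconcat
    by_contra hnf
    rw [hfull_iff2] at hnf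
    have key : ∀ m : ℕ, 1 ≤ m → ∀ ω' : ℕ → ℤ, isAdmissible β m ω' →
        ∃ y, y ∈ Set.Ico SA SB ∧ y ∈ cylinder β m ω' := by
      intro m hm ω' hadm'
      obtain ⟨x, hx, hdx⟩ := hconcat m hm ω' hadm'
      have hxc : x ∈ cylinder β n ω := by
        refine ⟨hx, fun k hk => ?_⟩
        have h := hdx k (by omega)
        simpa [hk] using h
      refine ⟨(betaT β)^[n] x, ?_, iterate_mem_Ico β x hn, fun k hk => ?_⟩
      · rw [← himg]
        exact ⟨x, hxc, rfl⟩
      · rw [← eps_shift]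
        have h := hdx (n + k) (by omega)
        have hnk : ¬ (n + k < n) := by omega
        simpa [hnk, Nat.add_sub_cancel_left] using h
    rcases (lt_or_eq_of_le hSA0).symm with hA | hA
    · -- SA = 0, so SB < 1
      have hB : SB < 1 := by
        rcases lt_or_eq_of_le hSB1 with h | h
        · exact h
        · exact absurd ⟨hA.symm, h⟩ hnf
      set z : ℝ := (SB + 1)/2 with hz
      have hz0 : 0 ≤ z := by rw [hz]; linarith [lt_of_le_of_lt hSA0 hSAB]
      have hz1 : z < 1 := by rw [hz]; linarith
      have hzB : SB < z := by rw [hz]; linarith [lt_of_lt_of_le hSAB hSB1]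
      obtain ⟨m, hm, hmlt⟩ := exists_inv_pow_lt hβ (show (0:ℝ) < z - SB by linarith)
      obtain ⟨y, hyI, hyc⟩ := key m hm (fun k => eps β z (k+1))
        ⟨z, ⟨hz0, hz1⟩, fun k _ => rfl⟩
      have hzc : z ∈ cylinder β m (fun k => eps β z (k+1)) :=
        ⟨⟨hz0, hz1⟩, fun k _ => rfl⟩
      have hdist := cylinder_dist hβ hm hyc hzc
      rw [abs_lt] at hdist
      have : SB < y := by linarith [hdist.1]
      exact absurd hyI.2 (not_lt.mpr (le_of_lt this))
    · -- SA > 0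
      obtain ⟨m, hm, hmlt⟩ := exists_inv_pow_lt hβ hA
      have h0T : betaT β 0 = 0 := by simp [betaT]
      have h0d : ∀ k, eps β (0:ℝ) (k+1) = 0 := by
        intro k
        rw [eps_succ, Function.iterate_fixed h0T]
        simp
      obtain ⟨y, hyI, hyc⟩ := key m hm (fun _ => 0)
        ⟨0, ⟨le_refl 0, one_pos⟩, fun k _ => h0d k⟩
      have h0c : (0:ℝ) ∈ cylinder β m (fun _ => (0:ℤ)) :=
        ⟨⟨le_refl 0, one_pos⟩, fun k _ => h0d k⟩
      have hdist := cylinder_dist hβ hm hyc h0c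
      rw [sub_zero, abs_lt] at hdist
      have : y < SA := lt_trans hdist.2 hmlt
      exact absurd hyI.1 (not_le.mpr this)
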